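/- Let H = (V, E, ω) be a hypergraph with distinct vertices s, t ∈ V and let N_L be its Lawler network. Then the minimum capacity over all (s,t)-cuts of N_L equals the minimum, over all sets S ⊆ V with s ∈ S and t ∉ S, of the cut weight of the bipartition (S, V∖S) of H, i.e., of Σ{ω(e) : e ∈ E, e ∩ S ≠ ∅ and e ∖ S ≠ ∅}. -/

import Mathlib

open scoped ENNReal

/-- Capacities of the Lawler network of a hypergraph: nodes are the hypernodes
(`Sum.inl`) together with two bridging nodes per net (`Sum.inr (e, false)` is `e′`,
`Sum.inr (e, true)` is `e″`). -/
noncomputable def lawlerCap {V E : Type} [DecidableEq V] [DecidableEq E]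
    (pins : E → Finset V) (ω : E → ℝ) :
    V ⊕ E × Bool → V ⊕ E × Bool → ℝ≥0∞
  | Sum.inl p, Sum.inr (e, false) => if p ∈ pins e then ⊤ else 0
  | Sum.inr (e, false), Sum.inr (e', true) => if e = e' then ENNReal.ofReal (ω e) else 0
  | Sum.inr (e, true), Sum.inl p => if p ∈ pins e then ⊤ else 0
  | _, _ => 0

/-- `f` is an `(s,t)`-flow for the capacity function `c`. -/
def IsFlow {ν : Type} [Fintype ν] (c : ν → ν → ℝ≥0∞) (s t : ν) (f : ν → ν → ℝ) : Prop :=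
  (∀ u v, (f u v : EReal) ≤ (c u v : EReal)) ∧
  (∀ u v, f u v = - f v u) ∧
  (∀ u, u ≠ s → u ≠ t → ∑ v, f u v = 0)

/-- The value of a flow. -/
noncomputable def flowValue {ν : Type} [Fintype ν] (f : ν → ν → ℝ) (s : ν) : ℝ :=
  ∑ v, f s v

/-- `f` is a maximum `(s,t)`-flow. -/
def IsMaxFlow {ν : Type} [Fintype ν] (c : ν → ν → ℝ≥0∞) (s t : ν) (f : ν → ν → ℝ) : Prop :=
  IsFlow c s t f ∧ ∀ g, IsFlow c s t g → flowValue g s ≤ flowValue f s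

/-- `(u,v)` is an edge of the residual network, i.e. `r_f(u,v) = c(u,v) - f(u,v) > 0`. -/
def ResidualEdge {ν : Type} (c : ν → ν → ℝ≥0∞) (f : ν → ν → ℝ) (u v : ν) : Prop :=
  (f u v : EReal) < (c u v : EReal)

open scoped Classical in
/-- The capacity of the `(s,t)`-cut `(S, 𝒱 ∖ S)`. -/
noncomputable def cutCap {ν : Type} [Fintype ν] (c : ν → ν → ℝ≥0∞) (S : Set ν) : ℝ≥0∞ :=
  ∑ u, ∑ v, if u ∈ S ∧ v ∉ S then c u v else 0

open scoped Classical in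
/-- The cut weight of the bipartition `(S, V ∖ S)` of a hypergraph: the total
weight of all nets split by `S`. -/
noncomputable def hypCutWeight {V E : Type} [Fintype E]
    (pins : E → Finset V) (ω : E → ℝ) (S : Set V) : ℝ :=
  ∑ e, if (∃ p ∈ pins e, p ∈ S) ∧ (∃ p ∈ pins e, p ∉ S) then ω e else 0

open scoped Classical

private lemma cutCap_prod {ν : Type} [Fintype ν] (c : ν → ν → ℝ≥0∞) (S : Set ν) :
    cutCap c S = ∑ x ∈ Finset.univ ×ˢ Finset.univ,
      (if x.1 ∈ S ∧ x.2 ∉ S then c x.1 x.2 else 0) := by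
  rw [Finset.sum_product]; rfl

private def bridge {V E : Type} (e : E) : (V ⊕ E × Bool) × (V ⊕ E × Bool) :=
  (Sum.inr (e, false), Sum.inr (e, true))

private lemma bridge_inj {V E : Type} : Function.Injective (bridge (V := V) (E := E)) := by
  intro a b h
  simpa [bridge] using h

private lemma single_term_le {ν : Type} [Fintype ν] (c : ν → ν → ℝ≥0∞) (S : Set ν)
    (u v : ν) : (if u ∈ S ∧ v ∉ S then c u v else 0) ≤ cutCap c S := by
  calc (if u ∈ S ∧ v ∉ S then c u v else 0)
      ≤ ∑ w, if u ∈ S ∧ w ∉ S then c u w else 0 :=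
        Finset.single_le_sum (f := fun w => if u ∈ S ∧ w ∉ S then c u w else 0)
          (fun _ _ => zero_le) (Finset.mem_univ v)
    _ ≤ cutCap c S :=
        Finset.single_le_sum (f := fun x => ∑ w, if x ∈ S ∧ w ∉ S then c x w else 0)
          (fun _ _ => zero_le) (Finset.mem_univ u)

private lemma lemA {V E : Type} [Fintype V] [Fintype E] [DecidableEq V] [DecidableEq E]
    (pins : E → Finset V) (ω : E → ℝ) (hω : ∀ e, 0 ≤ ω e) (S : Set V) :
    cutCap (lawlerCap pins ω)
      (Sum.elim (· ∈ S)
        (fun x => if x.2 then ∀ p ∈ pins x.1, p ∈ S else ∃ p ∈ pins x.1, p ∈ S) : Set _)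
      = ENNReal.ofReal (hypCutWeight pins ω S) := by
  set 𝒮 : Set (V ⊕ E × Bool) := Sum.elim (· ∈ S)
    (fun x => if x.2 then ∀ p ∈ pins x.1, p ∈ S else ∃ p ∈ pins x.1, p ∈ S) with h𝒮
  have hmemL : ∀ v : V, (Sum.inl v ∈ 𝒮) = (v ∈ S) := fun v => rfl
  have hmemF : ∀ e : E, (Sum.inr (e, false) ∈ 𝒮) = (∃ p ∈ pins e, p ∈ S) := fun e => rfl
  have hmemT : ∀ e : E, (Sum.inr (e, true) ∈ 𝒮) = (∀ p ∈ pins e, p ∈ S) := fun e => rfl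
  have hzero : ∀ x ∈ (Finset.univ : Finset ((V ⊕ E × Bool) × (V ⊕ E × Bool))),
      x ∉ (Finset.univ : Finset E).image (bridge (V := V)) →
      (if x.1 ∈ 𝒮 ∧ x.2 ∉ 𝒮 then lawlerCap pins ω x.1 x.2 else 0) = 0 := by
    rintro ⟨u, v⟩ - hx
    have hxe : ∀ e : E, (u, v) ≠ bridge (V := V) e := by
      intro e h; exact hx (Finset.mem_image.2 ⟨e, Finset.mem_univ e, h.symm⟩)
    rcases u with p | ⟨e, b⟩ <;> rcases v with q | ⟨e', b'⟩
    · simp [lawlerCap]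
    · rcases b' with _ | _
      · simp only [lawlerCap, hmemL, hmemF]
        split_ifs with h h2
        · exact absurd ⟨p, h2, h.1⟩ h.2
        · rfl
        · rfl
      · simp [lawlerCap]
    · rcases b with _ | _
      · simp [lawlerCap]
      · simp only [lawlerCap, hmemT, hmemL]
        split_ifs with h h2
        · exact absurd (h.1 q h2) h.2
        · rfl
        · rfl
    · rcases b with _ | _ <;> rcases b' with _ | _
      · simp [lawlerCap]
      · have hne : e ≠ e' := by
          intro h; exact hxe e (by simp [bridge, h])
        simp [lawlerCap, hne]
      · simp [lawlerCap]
      · simp [lawlerCap]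
  rw [cutCap_prod, Finset.univ_product_univ,
    ← Finset.sum_subset (Finset.subset_univ _) hzero,
    Finset.sum_image (f := fun x => if x.1 ∈ 𝒮 ∧ x.2 ∉ 𝒮 then lawlerCap pins ω x.1 x.2 else 0)
      (fun a _ b _ h => bridge_inj h)]
  · have : ∀ e : E, (if (bridge (V := V) e).1 ∈ 𝒮 ∧ (bridge (V := V) e).2 ∉ 𝒮 then
        lawlerCap pins ω (bridge (V := V) e).1 (bridge (V := V) e).2 else 0)
        = if (∃ p ∈ pins e, p ∈ S) ∧ (∃ p ∈ pins e, p ∉ S) then ENNReal.ofReal (ω e) else 0 := by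
      intro e
      simp only [bridge, hmemF, hmemT, lawlerCap, if_pos rfl]
      congr 1
      simp [not_forall]
    rw [Finset.sum_congr rfl (fun e _ => this e)]
    rw [hypCutWeight, ENNReal.ofReal_sum_of_nonneg (fun e _ => by split <;> simp [hω e])]
    refine Finset.sum_congr rfl (fun e _ => ?_)
    rw [apply_ite ENNReal.ofReal, ENNReal.ofReal_zero]

private lemma lemB {V E : Type} [Fintype V] [Fintype E] [DecidableEq V] [DecidableEq E]
    (pins : E → Finset V) (ω : E → ℝ) (hω : ∀ e, 0 ≤ ω e) (𝒮 : Set (V ⊕ E × Bool)) :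
    ENNReal.ofReal (hypCutWeight pins ω {v | Sum.inl v ∈ 𝒮}) ≤ cutCap (lawlerCap pins ω) 𝒮 := by
  by_cases htop : cutCap (lawlerCap pins ω) 𝒮 = ⊤
  · simp [htop]
  rw [hypCutWeight, ENNReal.ofReal_sum_of_nonneg (fun e _ => by split <;> simp [hω e])]
  calc ∑ e, ENNReal.ofReal (if (∃ p ∈ pins e, Sum.inl p ∈ 𝒮) ∧ (∃ p ∈ pins e, Sum.inl p ∉ 𝒮)
          then ω e else 0)
      ≤ ∑ e, (if (bridge (V := V) e).1 ∈ 𝒮 ∧ (bridge (V := V) e).2 ∉ 𝒮 then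
          lawlerCap pins ω (bridge (V := V) e).1 (bridge (V := V) e).2 else 0) := by
        refine Finset.sum_le_sum (fun e _ => ?_)
        rw [apply_ite ENNReal.ofReal, ENNReal.ofReal_zero]
        by_cases h : (∃ p ∈ pins e, Sum.inl p ∈ 𝒮) ∧ (∃ p ∈ pins e, Sum.inl p ∉ 𝒮)
        · rw [if_pos h]
          obtain ⟨⟨p, hp, hpS⟩, ⟨q, hq, hqS⟩⟩ := h
          have he1 : Sum.inr (e, false) ∈ 𝒮 := by
            by_contra hc
            have := single_term_le (lawlerCap pins ω) 𝒮 (Sum.inl p) (Sum.inr (e, false))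
            rw [if_pos ⟨hpS, hc⟩] at this
            simp only [lawlerCap, if_pos hp] at this
            exact htop (top_le_iff.mp this)
          have he2 : Sum.inr (e, true) ∉ 𝒮 := by
            intro hc
            have := single_term_le (lawlerCap pins ω) 𝒮 (Sum.inr (e, true)) (Sum.inl q)
            rw [if_pos ⟨hc, hqS⟩] at this
            simp only [lawlerCap, if_pos hq] at this
            exact htop (top_le_iff.mp this)
          rw [if_pos ⟨he1, he2⟩]
          simp [bridge, lawlerCap]
        · rw [if_neg h]
          exact zero_le
    _ = ∑ x ∈ (Finset.univ : Finset E).image (bridge (V := V)),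
          (if x.1 ∈ 𝒮 ∧ x.2 ∉ 𝒮 then lawlerCap pins ω x.1 x.2 else 0) :=
        (Finset.sum_image
          (f := fun x => if x.1 ∈ 𝒮 ∧ x.2 ∉ 𝒮 then lawlerCap pins ω x.1 x.2 else 0)
          (fun a _ b _ h => bridge_inj h)).symm
    _ ≤ ∑ x : (V ⊕ E × Bool) × (V ⊕ E × Bool),
          (if x.1 ∈ 𝒮 ∧ x.2 ∉ 𝒮 then lawlerCap pins ω x.1 x.2 else 0) :=
        Finset.sum_le_sum_of_subset (Finset.subset_univ _)
    _ = cutCap (lawlerCap pins ω) 𝒮 := by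
        rw [cutCap_prod, Finset.univ_product_univ]

/-- The minimum capacity over all `(s,t)`-cuts of the Lawler network
of a hypergraph equals the minimum, over all `S ⊆ V` with `s ∈ S` and `t ∉ S`, of the
cut weight of the bipartition `(S, V ∖ S)` of the hypergraph. -/
theorem lawler_min_cut_eq_hyp_min_cut
    {V E : Type} [Fintype V] [Fintype E] [DecidableEq V] [DecidableEq E]
    (pins : E → Finset V) (ω : E → ℝ) (hω : ∀ e, 0 < ω e)
    (s t : V) (hst : s ≠ t) :
    sInf {x : ℝ≥0∞ | ∃ 𝒮 : Set (V ⊕ E × Bool),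
        Sum.inl s ∈ 𝒮 ∧ Sum.inl t ∉ 𝒮 ∧ cutCap (lawlerCap pins ω) 𝒮 = x} =
      sInf {x : ℝ≥0∞ | ∃ S : Set V,
        s ∈ S ∧ t ∉ S ∧ ENNReal.ofReal (hypCutWeight pins ω S) = x} := by
  have hω' : ∀ e, 0 ≤ ω e := fun e => (hω e).le
  apply le_antisymm
  · refine le_sInf ?_
    rintro x ⟨S, hs, ht, rfl⟩
    exact sInf_le ⟨Sum.elim (· ∈ S)
      (fun y => if y.2 then ∀ p ∈ pins y.1, p ∈ S else ∃ p ∈ pins y.1, p ∈ S),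
      hs, ht, lemA pins ω hω' S⟩
  · refine le_sInf ?_
    rintro x ⟨𝒮, hs, ht, rfl⟩
    exact le_trans (sInf_le ⟨{v | Sum.inl v ∈ 𝒮}, hs, ht, rfl⟩) (lemB pins ω hω' 𝒮)
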